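/- Let Ω ⊆ ℝᵈ be a Lebesgue-measurable set with Lebesgue measure |Ω| = 1, and let b : Ω → [0, B] be a measurable function with ∫_Ω b(x) dx = 1. For ε₁, ε₃ > 0 let r_{ε₁,ε₃} : Ω → (0, ∞) denote the a.e.-unique measurable function such that log r_{ε₁,ε₃} + ε₁ r_{ε₁,ε₃} + ε₃ b is a.e. equal to a constant on Ω and ∫_Ω r_{ε₁,ε₃} = 1. Then there exist ε₀ > 0 and C > 0 such that for all ε₁, ε₃ ∈ (0, ε₀] one has ess sup_{x ∈ Ω} | r_{ε₁,ε₃}(x) − 1 − ε₃ (1 − b(x)) | ≤ C (ε₁ + ε₃)². -/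

import Mathlib

open MeasureTheory

set_option maxHeartbeats 1000000 in
/-- Rigorous form of the asymptotic expansion (2.7) of the paper for the equilibrium of
the first entropy–mobility pair: for small ε₁, ε₃, any normalized positive density whose
entropy variable log r + ε₁ r + ε₃ b is a.e. constant satisfies
r = 1 + ε₃(1 - b) + O((ε₁ + ε₃)²) uniformly a.e. -/
theorem equilibrium_pair1_expansion
    (d : ℕ) (Ω : Set (EuclideanSpace ℝ (Fin d))) (hΩ : MeasurableSet Ω)
    (hΩvol : volume Ω = 1)
    (B : ℝ) (b : EuclideanSpace ℝ (Fin d) → ℝ) (hbmeas : Measurable b)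
    (hb0 : ∀ x, 0 ≤ b x) (hbB : ∀ x, b x ≤ B)
    (hbint : ∫ x, b x ∂(volume.restrict Ω) = 1) :
    ∃ ε₀ > (0 : ℝ), ∃ C > (0 : ℝ),
      ∀ ε₁ ε₃ : ℝ, 0 < ε₁ → ε₁ ≤ ε₀ → 0 < ε₃ → ε₃ ≤ ε₀ →
      ∀ χ : ℝ, ∀ r : EuclideanSpace ℝ (Fin d) → ℝ,
        Measurable r →
        (∀ᵐ x ∂(volume.restrict Ω), 0 < r x) →
        (∀ᵐ x ∂(volume.restrict Ω), Real.log (r x) + ε₁ * r x + ε₃ * b x = χ) →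
        ∫ x, r x ∂(volume.restrict Ω) = 1 →
        ∀ᵐ x ∂(volume.restrict Ω),
          |r x - 1 - ε₃ * (1 - b x)| ≤ C * (ε₁ + ε₃) ^ 2 := by
  have hB0 : (0:ℝ) ≤ B := le_trans (hb0 0) (hbB 0)
  have hB1 : (0:ℝ) < 1 + B := by linarith
  refine ⟨1/(10*(1+B)), by positivity, 12*(1+B)^2, by positivity, ?_⟩
  intro ε₁ ε₃ hε₁ hε₁' hε₃ hε₃' χ r hrmeas hrpos hχ hrint
  set μ := volume.restrict Ω with hμdef
  haveI : IsProbabilityMeasure μ := ⟨by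
    rw [hμdef, Measure.restrict_apply_univ]; exact hΩvol⟩
  have hεsum : ε₁ + ε₃ ≤ 2/(10*(1+B)) := by
    have h1 : ε₁ ≤ 1/(10*(1+B)) := hε₁'
    have h2 : ε₃ ≤ 1/(10*(1+B)) := hε₃'
    have : 1/(10*(1+B)) + 1/(10*(1+B)) = 2/(10*(1+B)) := by ring
    linarith
  set L : ℝ := 2*(1+B)*(ε₁+ε₃) with hLdef
  have hLpos : 0 < L := by positivity
  have hL25 : L ≤ 2/5 := by
    have : 2*(1+B)*(ε₁+ε₃) ≤ 2*(1+B)*(2/(10*(1+B))) :=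
      mul_le_mul_of_nonneg_left hεsum (by positivity)
    have h2 : 2*(1+B)*(2/(10*(1+B))) = 2/5 := by field_simp; ring
    linarith
  -- integrability of b
  have hb_int : Integrable b μ :=
    Integrable.mono' (integrable_const B) hbmeas.aestronglyMeasurable
      (Filter.Eventually.of_forall fun x => by
        rw [Real.norm_eq_abs, abs_of_nonneg (hb0 x)]; exact hbB x)
  -- lower bound on χ
  have hχ_lb : ε₁ ≤ χ := by
    by_contra h
    push_neg at h
    have hrlt : ∀ᵐ x ∂μ, r x < 1 := by
      filter_upwards [hrpos, hχ] with x hx hxe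
      by_contra hge
      push_neg at hge
      have h1 : 0 ≤ Real.log (r x) := Real.log_nonneg hge
      have h2 : ε₁ * 1 ≤ ε₁ * r x := mul_le_mul_of_nonneg_left hge hε₁.le
      have h3 : 0 ≤ ε₃ * b x := mul_nonneg hε₃.le (hb0 x)
      nlinarith
    have hr_int : Integrable r μ :=
      Integrable.mono' (integrable_const 1) hrmeas.aestronglyMeasurable
        (by filter_upwards [hrpos, hrlt] with x h1 h2
            rw [Real.norm_eq_abs, abs_of_pos h1]; exact h2.le)
    have h0 : ∫ x, (1 - r x) ∂μ = 0 := by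
      rw [integral_sub (integrable_const 1) hr_int, hrint, integral_const]
      simp
    have hae : (fun x => 1 - r x) =ᵐ[μ] 0 :=
      (integral_eq_zero_iff_of_nonneg_ae
        (by filter_upwards [hrlt] with x h; simp; linarith)
        ((integrable_const 1).sub hr_int)).mp h0
    obtain ⟨x, h1, h2⟩ := (hae.and hrlt).exists
    simp only [Pi.zero_apply] at h1
    linarith
  -- upper bound on χ
  have hχ_ub : χ ≤ ε₁ + ε₃ * B := by
    by_contra h
    push_neg at h
    have hrgt : ∀ᵐ x ∂μ, 1 < r x := by
      filter_upwards [hrpos, hχ] with x hx hxe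
      by_contra hle
      push_neg at hle
      have h1 : Real.log (r x) ≤ 0 := Real.log_nonpos hx.le hle
      have h2 : ε₁ * r x ≤ ε₁ * 1 := mul_le_mul_of_nonneg_left hle hε₁.le
      have h3 : ε₃ * b x ≤ ε₃ * B := mul_le_mul_of_nonneg_left (hbB x) hε₃.le
      nlinarith
    by_cases hr_int : Integrable r μ
    · have h0 : ∫ x, (r x - 1) ∂μ = 0 := by
        rw [integral_sub hr_int (integrable_const 1), hrint, integral_const]
        simp
      have hae : (fun x => r x - 1) =ᵐ[μ] 0 :=
        (integral_eq_zero_iff_of_nonneg_ae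
          (by filter_upwards [hrgt] with x h; simp; linarith)
          (hr_int.sub (integrable_const 1))).mp h0
      obtain ⟨x, h1, h2⟩ := (hae.and hrgt).exists
      simp only [Pi.zero_apply] at h1
      linarith
    · rw [integral_undef hr_int] at hrint
      norm_num at hrint
  -- a.e. upper bound on log r
  have hlog_ub : ∀ᵐ x ∂μ, Real.log (r x) ≤ ε₁ + ε₃ * B := by
    filter_upwards [hrpos, hχ] with x h1 h2
    have h3 : 0 ≤ ε₁ * r x := mul_nonneg hε₁.le h1.le
    have h4 : 0 ≤ ε₃ * b x := mul_nonneg hε₃.le (hb0 x)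
    linarith
  have hεB : ε₁ + ε₃ * B ≤ L/2 := by
    have : ε₃ * B ≤ (ε₁ + ε₃) * B := by nlinarith
    have h2 : L/2 = (1+B)*(ε₁+ε₃) := by rw [hLdef]; ring
    nlinarith
  -- a.e. upper bound on r
  have hr_ub : ∀ᵐ x ∂μ, r x ≤ 2 := by
    filter_upwards [hlog_ub, hrpos] with x h1 h2
    have hlog2 : Real.log (r x) ≤ Real.log 2 := by
      have := Real.log_two_gt_d9
      linarith [hεB, hL25]
    calc r x = Real.exp (Real.log (r x)) := (Real.exp_log h2).symm
      _ ≤ Real.exp (Real.log 2) := Real.exp_le_exp.mpr hlog2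
      _ = 2 := Real.exp_log (by norm_num)
  -- a.e. bound |log r| ≤ L
  have hlog_bound : ∀ᵐ x ∂μ, |Real.log (r x)| ≤ L := by
    filter_upwards [hχ, hrpos, hr_ub] with x h1 h2 h3
    rw [abs_le]
    have hεb : ε₃ * b x ≤ ε₃ * B := mul_le_mul_of_nonneg_left (hbB x) hε₃.le
    have hεb0 : 0 ≤ ε₃ * b x := mul_nonneg hε₃.le (hb0 x)
    have hε₁r : ε₁ * r x ≤ ε₁ * 2 := mul_le_mul_of_nonneg_left h3 hε₁.le
    have hε₁r0 : 0 ≤ ε₁ * r x := mul_nonneg hε₁.le h2.le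
    constructor
    · -- log r = χ - ε₁ r - ε₃ b ≥ ε₁ - 2ε₁ - ε₃B ≥ -L
      have hεBL : ε₁ + ε₃ * B ≤ L := by linarith [hεB, hLpos]
      linarith
    · linarith [hεB, hLpos]
  -- key pointwise estimate |r - 1 - log r| ≤ L²
  have hexp_key : ∀ᵐ x ∂μ, |r x - 1 - Real.log (r x)| ≤ L^2 := by
    filter_upwards [hrpos, hlog_bound] with x h1 h2
    have h3 : |Real.log (r x)| ≤ 1 := le_trans h2 (by linarith)
    have h4 := Real.abs_exp_sub_one_sub_id_le h3
    rw [Real.exp_log h1] at h4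
    have h5 : (Real.log (r x))^2 ≤ L^2 := by
      rw [← sq_abs]
      exact pow_le_pow_left₀ (abs_nonneg _) h2 2
    linarith
  -- a.e. bound |r - 1| ≤ 2L
  have hr1 : ∀ᵐ x ∂μ, |r x - 1| ≤ 2*L := by
    filter_upwards [hexp_key, hlog_bound] with x h1 h2
    have h3 : |r x - 1| ≤ |r x - 1 - Real.log (r x)| + |Real.log (r x)| := by
      calc |r x - 1| = |(r x - 1 - Real.log (r x)) + Real.log (r x)| := by ring_nf
        _ ≤ _ := abs_add_le _ _
    nlinarith
  -- integrability of r and log r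
  have hr_int : Integrable r μ :=
    Integrable.mono' (integrable_const 2) hrmeas.aestronglyMeasurable
      (by filter_upwards [hrpos, hr_ub] with x h1 h2
          rw [Real.norm_eq_abs, abs_of_pos h1]; exact h2)
  have hlog_int : Integrable (fun x => Real.log (r x)) μ :=
    Integrable.mono' (integrable_const L)
      (Real.measurable_log.comp hrmeas).aestronglyMeasurable
      (by filter_upwards [hlog_bound] with x h; exact h)
  -- integral of log r
  have hint_log : ∫ x, Real.log (r x) ∂μ = χ - ε₁ - ε₃ := by
    have h1 : ∫ x, Real.log (r x) ∂μ = ∫ x, (χ - ε₁ * r x - ε₃ * b x) ∂μ :=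
      integral_congr_ae (by filter_upwards [hχ] with x h; linarith)
    have hA : Integrable (fun x => χ - ε₁ * r x) μ := by
      exact (integrable_const χ).sub (hr_int.const_mul ε₁)
    have hB : Integrable (fun x => ε₃ * b x) μ := hb_int.const_mul ε₃
    have h2 : ∫ x, (χ - ε₁ * r x - ε₃ * b x) ∂μ
        = (∫ x, (χ - ε₁ * r x) ∂μ) - ∫ x, ε₃ * b x ∂μ := integral_sub hA hB
    have h3 : ∫ x, (χ - ε₁ * r x) ∂μ
        = (∫ x, (χ : ℝ) ∂μ) - ∫ x, ε₁ * r x ∂μ :=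
      integral_sub (integrable_const χ) (hr_int.const_mul ε₁)
    rw [h1, h2, h3, integral_const, integral_const_mul, integral_const_mul, hrint, hbint]
    simp
  -- |χ - ε₁ - ε₃| ≤ L²
  have hχ_close : |χ - ε₁ - ε₃| ≤ L^2 := by
    have heq : χ - ε₁ - ε₃ = ∫ x, (Real.log (r x) - (r x - 1)) ∂μ := by
      have hA : Integrable (fun x => r x - 1) μ := by
        exact hr_int.sub (integrable_const 1)
      have h2 : ∫ x, (Real.log (r x) - (r x - 1)) ∂μ
          = (∫ x, Real.log (r x) ∂μ) - ∫ x, (r x - 1) ∂μ := integral_sub hlog_int hA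
      have h3 : ∫ x, (r x - 1) ∂μ = (∫ x, r x ∂μ) - ∫ x, (1:ℝ) ∂μ :=
        integral_sub hr_int (integrable_const 1)
      rw [h2, h3, hint_log, hrint, integral_const]
      simp
    rw [heq, ← Real.norm_eq_abs]
    have hb2 : ∀ᵐ x ∂μ, ‖Real.log (r x) - (r x - 1)‖ ≤ L^2 := by
      filter_upwards [hexp_key] with x h
      rw [Real.norm_eq_abs, abs_sub_comm]
      exact h
    calc ‖∫ x, (Real.log (r x) - (r x - 1)) ∂μ‖
        ≤ L^2 * (μ Set.univ).toReal := norm_integral_le_of_norm_le_const hb2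
      _ = L^2 := by simp
  -- conclusion
  filter_upwards [hχ, hexp_key, hr1] with x h1 h2 h3
  have key : r x - 1 - ε₃*(1 - b x)
      = (r x - 1 - Real.log (r x)) + (χ - ε₁ - ε₃) - ε₁*(r x - 1) := by
    have : Real.log (r x) = χ - ε₁ * r x - ε₃ * b x := by linarith
    rw [this]; ring
  have habs : |r x - 1 - ε₃*(1 - b x)|
      ≤ |r x - 1 - Real.log (r x)| + |χ - ε₁ - ε₃| + ε₁ * |r x - 1| := by
    rw [key]
    calc |(r x - 1 - Real.log (r x)) + (χ - ε₁ - ε₃) - ε₁*(r x - 1)|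
        ≤ |(r x - 1 - Real.log (r x)) + (χ - ε₁ - ε₃)| + |ε₁*(r x - 1)| :=
          abs_sub _ _
      _ ≤ |r x - 1 - Real.log (r x)| + |χ - ε₁ - ε₃| + ε₁ * |r x - 1| := by
          rw [abs_mul, abs_of_pos hε₁]
          exact add_le_add (abs_add_le _ _) le_rfl
  have hL2 : L^2 = 4*(1+B)^2*(ε₁+ε₃)^2 := by rw [hLdef]; ring
  have hfinal : |r x - 1 - Real.log (r x)| + |χ - ε₁ - ε₃| + ε₁ * |r x - 1|
      ≤ 12*(1+B)^2*(ε₁+ε₃)^2 := by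
    have h4 : ε₁ * |r x - 1| ≤ ε₁ * (2*L) := mul_le_mul_of_nonneg_left h3 hε₁.le
    have h5 : ε₁ * (2*L) ≤ (ε₁+ε₃) * (2*L) :=
      mul_le_mul_of_nonneg_right (by linarith) (by linarith)
    have h6 : (ε₁+ε₃) * (2*L) = 4*(1+B)*(ε₁+ε₃)^2 := by rw [hLdef]; ring
    have h7 : 4*(1+B)*(ε₁+ε₃)^2 ≤ 4*(1+B)^2*(ε₁+ε₃)^2 := by
      have hs : 0 ≤ (ε₁+ε₃)^2 := sq_nonneg _
      nlinarith [hB0]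
    linarith
  linarith
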